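/- Let y be a one-to-one stationary strategy (y(·|s) ≠ y(·|s') for s ≠ s') such that U¹(μ₀,y) ≥ U¹(μ,y) for every μ ∈ M(m). For ε > 0 define the perturbed payoff function ũ¹(s,b) = u¹(s,b) + ε·y(b|s). Then for every ε > 0, the strict inequality Ũ¹(μ₀,y) > Ũ¹(μ,y) holds for every μ ∈ M(m) with μ ≠ μ₀, where Ũ¹ is defined from ũ¹ in the same way as U¹ is defined from u¹. Consequently, every neighborhood of u¹ contains a payoff function for which y satisfies the strict incentive condition. -/
import Mathlib


/-- `μ` is a probability distribution on `S × S` whose two marginals both equal `m`. -/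
def IsCopula {S : Type*} [Fintype S] (m : S → ℝ) (μ : S × S → ℝ) : Prop :=
  (∀ q, 0 ≤ μ q) ∧ (∑ q : S × S, μ q = 1) ∧
    (∀ s, ∑ a, μ (s, a) = m s) ∧ (∀ a, ∑ s, μ (s, a) = m a)

/-- The diagonal copula `μ₀`. -/
def mu0 {S : Type*} [DecidableEq S] (m : S → ℝ) : S × S → ℝ :=
  fun q => if q.1 = q.2 then m q.1 else 0

/-- `y` is a stationary strategy: each `y a` is a probability distribution on `B`. -/
def IsStrategy {S B : Type*} [Fintype B] (y : S → B → ℝ) : Prop :=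
  (∀ a b, 0 ≤ y a b) ∧ ∀ a, ∑ b, y a b = 1

/-- `U(μ, y) = Σ_{(s,a)} μ(s,a) Σ_b y(b|a) u(s,b)`. -/
def Upay {S B : Type*} [Fintype S] [Fintype B]
    (u : S × B → ℝ) (μ : S × S → ℝ) (y : S → B → ℝ) : ℝ :=
  ∑ s, ∑ a, μ (s, a) * ∑ b, y a b * u (s, b)

lemma upay_add {S B : Type*} [Fintype S] [Fintype B]
    (u v : S × B → ℝ) (μ : S × S → ℝ) (y : S → B → ℝ) :
    Upay (fun q => u q + v q) μ y = Upay u μ y + Upay v μ y := by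
  simp only [Upay, mul_add, Finset.sum_add_distrib]

lemma upay_eps {S B : Type*} [Fintype S] [Fintype B]
    (ε : ℝ) (μ : S × S → ℝ) (y : S → B → ℝ) :
    Upay (fun q => ε * y q.1 q.2) μ y
      = ε * ∑ s, ∑ a, μ (s, a) * ∑ b, y a b * y s b := by
  simp only [Upay, Finset.mul_sum]
  exact Finset.sum_congr rfl fun s _ => Finset.sum_congr rfl fun a _ =>
    Finset.sum_congr rfl fun b _ => by ring

lemma diag_sum {S : Type*} [Fintype S] [DecidableEq S]
    (m : S → ℝ) (g : S → S → ℝ) :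
    ∑ s, ∑ a, mu0 m (s, a) * g s a = ∑ s, m s * g s s := by
  refine Finset.sum_congr rfl fun s _ => ?_
  simp [mu0, ite_mul, Finset.sum_ite_eq]

lemma key_lt {S B : Type*} [Fintype S] [DecidableEq S] [Fintype B]
    (m : S → ℝ) (μ : S × S → ℝ) (hμ : IsCopula m μ)
    (y : S → B → ℝ) (hinj : Function.Injective y) (hne : μ ≠ mu0 m) :
    (∑ s, ∑ a, μ (s, a) * ∑ b, y a b * y s b)
      < ∑ s, ∑ a, mu0 m (s, a) * ∑ b, y a b * y s b := by
  obtain ⟨hpos, _, hrow, hcol⟩ := hμ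
  set g : S → S → ℝ := fun s a => ∑ b, y a b * y s b with hg
  -- existence of a positive off-diagonal entry
  have hex : ∃ s a : S, s ≠ a ∧ 0 < μ (s, a) := by
    by_contra h
    push_neg at h
    apply hne
    funext q
    obtain ⟨s, a⟩ := q
    by_cases hsa : s = a
    · subst hsa
      have hz : ∀ a ∈ (Finset.univ : Finset S), a ≠ s → μ (s, a) = 0 := by
        intro a _ has
        exact le_antisymm (h s a (Ne.symm has)) (hpos (s, a))
      have hms : μ (s, s) = m s := by
        rw [← hrow s]
        exact (Finset.sum_eq_single s hz
          (fun hs => absurd (Finset.mem_univ s) hs)).symm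
      simp [mu0, hms]
    · have : μ (s, a) = 0 := le_antisymm (h s a hsa) (hpos (s, a))
      simp [mu0, hsa, this]
  -- positivity of the "variance" double sum
  have hvar : 0 < ∑ s, ∑ a, μ (s, a) * ∑ b, (y s b - y a b) ^ 2 := by
    obtain ⟨s₀, a₀, hsa, hp⟩ := hex
    have hysa : y s₀ ≠ y a₀ := fun hh => hsa (hinj hh)
    obtain ⟨b₀, hb₀⟩ : ∃ b, y s₀ b ≠ y a₀ b := by
      by_contra h; push_neg at h; exact hysa (funext h)
    have hFpos : 0 < ∑ b, (y s₀ b - y a₀ b) ^ 2 := by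
      refine Finset.sum_pos' (fun b _ => sq_nonneg _) ⟨b₀, Finset.mem_univ b₀, ?_⟩
      have : y s₀ b₀ - y a₀ b₀ ≠ 0 := sub_ne_zero.mpr hb₀
      positivity
    have hterm : ∀ s a : S, 0 ≤ μ (s, a) * ∑ b, (y s b - y a b) ^ 2 :=
      fun s a => mul_nonneg (hpos _) (Finset.sum_nonneg fun b _ => sq_nonneg _)
    refine Finset.sum_pos' (fun s _ => Finset.sum_nonneg fun a _ => hterm s a)
      ⟨s₀, Finset.mem_univ s₀, ?_⟩
    refine Finset.sum_pos' (fun a _ => hterm s₀ a) ⟨a₀, Finset.mem_univ a₀, ?_⟩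
    exact mul_pos hp hFpos
  -- the expansion identity
  have hid : ∑ s, ∑ a, μ (s, a) * ∑ b, (y s b - y a b) ^ 2
      = (∑ s, m s * g s s) + (∑ a, m a * g a a)
        - 2 * ∑ s, ∑ a, μ (s, a) * g s a := by
    have hexp : ∀ s a : S, (∑ b, (y s b - y a b) ^ 2)
        = g s s + g a a - 2 * g s a := by
      intro s a
      have : ∀ b, (y s b - y a b) ^ 2
          = y s b * y s b + y a b * y a b - 2 * (y a b * y s b) := by
        intro b; ring
      rw [Finset.sum_congr rfl fun b _ => this b]
      simp only [hg, Finset.sum_sub_distrib, Finset.sum_add_distrib, ← Finset.mul_sum]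
    calc ∑ s, ∑ a, μ (s, a) * ∑ b, (y s b - y a b) ^ 2
        = ∑ s, ∑ a, (μ (s, a) * g s s + μ (s, a) * g a a
            - 2 * (μ (s, a) * g s a)) := by
          refine Finset.sum_congr rfl fun s _ => Finset.sum_congr rfl fun a _ => ?_
          rw [hexp s a]; ring
      _ = (∑ s, ∑ a, μ (s, a) * g s s) + (∑ s, ∑ a, μ (s, a) * g a a)
            - 2 * ∑ s, ∑ a, μ (s, a) * g s a := by
          simp only [Finset.sum_sub_distrib, Finset.sum_add_distrib, Finset.mul_sum]
      _ = (∑ s, m s * g s s) + (∑ a, m a * g a a)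
            - 2 * ∑ s, ∑ a, μ (s, a) * g s a := by
          congr 1
          congr 1
          · refine Finset.sum_congr rfl fun s _ => ?_
            rw [← Finset.sum_mul, hrow s]
          · rw [Finset.sum_comm]
            refine Finset.sum_congr rfl fun a _ => ?_
            rw [← Finset.sum_mul, hcol a]
  rw [diag_sum]
  have : 0 < 2 * ((∑ s, m s * g s s) - ∑ s, ∑ a, μ (s, a) * g s a) := by
    rw [hid] at hvar; linarith
  linarith

theorem stmt11 {S B : Type*} [Fintype S] [DecidableEq S] (hS : 1 < Fintype.card S)
    [Fintype B] [Nonempty B]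
    (m : S → ℝ) (hm : ∀ s, 0 < m s) (hm1 : ∑ s, m s = 1)
    (u1 : S × B → ℝ)
    (y : S → B → ℝ) (hy : IsStrategy y) (hinj : Function.Injective y)
    (hC1 : ∀ μ : S × S → ℝ, IsCopula m μ → Upay u1 μ y ≤ Upay u1 (mu0 m) y) :
    (∀ ε : ℝ, 0 < ε →
      ∀ μ : S × S → ℝ, IsCopula m μ → μ ≠ mu0 m →
        Upay (fun q => u1 q + ε * y q.1 q.2) μ y <
          Upay (fun q => u1 q + ε * y q.1 q.2) (mu0 m) y) ∧
    (∀ δ : ℝ, 0 < δ → ∃ u1' : S × B → ℝ, ‖u1' - u1‖ < δ ∧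
      ∀ μ : S × S → ℝ, IsCopula m μ → μ ≠ mu0 m →
        Upay u1' μ y < Upay u1' (mu0 m) y) := by
  have main : ∀ ε : ℝ, 0 < ε →
      ∀ μ : S × S → ℝ, IsCopula m μ → μ ≠ mu0 m →
        Upay (fun q => u1 q + ε * y q.1 q.2) μ y <
          Upay (fun q => u1 q + ε * y q.1 q.2) (mu0 m) y := by
    intro ε hε μ hμ hne
    rw [upay_add u1 (fun q => ε * y q.1 q.2) μ y,
        upay_add u1 (fun q => ε * y q.1 q.2) (mu0 m) y,
        upay_eps, upay_eps]
    exact add_lt_add_of_le_of_lt (hC1 μ hμ)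
      (mul_lt_mul_of_pos_left (key_lt m μ hμ y hinj hne) hε)
  refine ⟨main, fun δ hδ => ?_⟩
  refine ⟨fun q => u1 q + (δ / 2) * y q.1 q.2, ?_, main (δ / 2) (half_pos hδ)⟩
  have hnorm : ‖(fun q : S × B => u1 q + (δ / 2) * y q.1 q.2) - u1‖ ≤ δ / 2 := by
    rw [pi_norm_le_iff_of_nonneg (le_of_lt (half_pos hδ))]
    intro q
    have h01 : 0 ≤ y q.1 q.2 := hy.1 q.1 q.2
    have hle1 : y q.1 q.2 ≤ 1 := by
      calc y q.1 q.2 ≤ ∑ b, y q.1 b :=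
            Finset.single_le_sum (fun b _ => hy.1 q.1 b) (Finset.mem_univ q.2)
        _ = 1 := hy.2 q.1
    simp only [Pi.sub_apply, add_sub_cancel_left, Real.norm_eq_abs]
    rw [abs_mul, abs_of_nonneg (le_of_lt (half_pos hδ)), abs_of_nonneg h01]
    nlinarith
  linarith [hnorm]
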